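/- Let f : ℝ² → ℝ be a smooth G-invariant function (f(p+nq,q) = f(p,q) for all n ∈ ℤ). Then f = h + g where h(p,q) = f(0,q) depends only on q, and g is a smooth G-invariant function that vanishes together with all its partial derivatives at every point of the line q = 0. -/

import Mathlib

open Set

namespace Stmt1Aux


noncomputable def Lmap (c : ℝ) : (ℝ × ℝ) →L[ℝ] (ℝ × ℝ) :=
  ((ContinuousLinearMap.fst ℝ ℝ ℝ) + c • (ContinuousLinearMap.snd ℝ ℝ ℝ)).prod
    (ContinuousLinearMap.snd ℝ ℝ ℝ)

lemma Lmap_apply (c p q : ℝ) : Lmap c (p, q) = (p + c * q, q) := by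
  simp [Lmap, smul_eq_mul]

def Inv (h : ℝ × ℝ → ℝ) : Prop := ∀ (n : ℤ) (x : ℝ × ℝ), h (Lmap n x) = h x

noncomputable def pd (h : ℝ × ℝ → ℝ) : ℝ × ℝ → ℝ := fun x => fderiv ℝ h x (1, 0)

lemma pd_contDiff {h : ℝ × ℝ → ℝ} (hh : ContDiff ℝ (⊤ : ℕ∞) h) :
    ContDiff ℝ (⊤ : ℕ∞) (pd h) :=
  (hh.fderiv_right (by simp)).clm_apply contDiff_const

lemma pd_inv {h : ℝ × ℝ → ℝ} (hh : ContDiff ℝ (⊤ : ℕ∞) h) (hi : Inv h) : Inv (pd h) := by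
  intro n x
  have hcomp : h ∘ (Lmap n) = h := funext fun y => hi n y
  have hdiff : DifferentiableAt ℝ h (Lmap n x) := (hh.differentiable (by simp)).differentiableAt
  have h1 : fderiv ℝ (h ∘ (Lmap n)) x = (fderiv ℝ h (Lmap n x)).comp (Lmap n) := by
    rw [fderiv_comp x hdiff ((Lmap n).differentiableAt)]
    rw [(Lmap n).fderiv]
  have h2 : (Lmap n) ((1:ℝ), (0:ℝ)) = ((1:ℝ), (0:ℝ)) := by
    rw [Lmap_apply]; norm_num
  calc pd h (Lmap n x) = fderiv ℝ h (Lmap n x) ((Lmap n) (1,0)) := by rw [h2]; rfl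
    _ = fderiv ℝ (h ∘ (Lmap n)) x (1,0) := by rw [h1]; rfl
    _ = pd h x := by rw [hcomp]; rfl

lemma pdIter_contDiff {g : ℝ × ℝ → ℝ} (hg : ContDiff ℝ (⊤ : ℕ∞) g) (j : ℕ) :
    ContDiff ℝ (⊤ : ℕ∞) (pd^[j] g) := by
  induction j with
  | zero => exact hg
  | succ j ih => rw [Function.iterate_succ_apply']; exact pd_contDiff ih

lemma pdIter_inv {g : ℝ × ℝ → ℝ} (hg : ContDiff ℝ (⊤ : ℕ∞) g) (hi : Inv g) (j : ℕ) :
    Inv (pd^[j] g) := by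
  induction j with
  | zero => exact hi
  | succ j ih => rw [Function.iterate_succ_apply']; exact pd_inv (pdIter_contDiff hg j) ih

lemma hasDerivAt_slice1 {F : ℝ × ℝ → ℝ} (hF : ContDiff ℝ (⊤ : ℕ∞) F) (q p : ℝ) :
    HasDerivAt (fun p => F (p, q)) (pd F (p, q)) p := by
  have h1 : HasDerivAt (fun p : ℝ => ((p, q) : ℝ × ℝ)) (1, 0) p :=
    (hasDerivAt_id p).prodMk (hasDerivAt_const p q)
  exact ((hF.differentiable (by simp)) (p, q)).hasFDerivAt.comp_hasDerivAt p h1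


lemma strip_bound {g : ℝ × ℝ → ℝ} (hg : ContDiff ℝ (⊤ : ℕ∞) g) (hi : Inv g)
    (h0 : ∀ q : ℝ, g (0, q) = 0) (K : ℕ) :
    ∃ C > 0, ∀ p q : ℝ, q ≠ 0 → |q| ≤ 1 → |g (p, q)| ≤ C * |q| ^ K := by
  -- bound for the K-th pure p-derivative on the square
  have hScomp : IsCompact ((Icc (-1:ℝ) 1) ×ˢ (Icc (-1:ℝ) 1)) :=
    isCompact_Icc.prod isCompact_Icc
  obtain ⟨M, hM⟩ := hScomp.exists_bound_of_continuousOn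
    ((pdIter_contDiff hg K).continuous.continuousOn (f := pd^[K] g))
  set C := |M| + 1 with hC
  have hCpos : 0 < C := by positivity
  refine ⟨C, hCpos, ?_⟩
  intro p q hq hq1
  -- zeros of each iterated derivative in uIcc 0 q
  have hzero : ∀ j : ℕ, ∃ z ∈ uIcc (0:ℝ) q, pd^[j] g (z, q) = 0 := by
    intro j
    induction j with
    | zero => exact ⟨0, left_mem_uIcc, h0 q⟩
    | succ j _ =>
      have hend : pd^[j] g (0, q) = pd^[j] g (q, q) := by
        have := pdIter_inv hg hi j 1 (0, q)
        rw [Lmap_apply] at this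
        simp at this
        exact this.symm
      have hcont : Continuous (fun p : ℝ => pd^[j] g (p, q)) :=
        (pdIter_contDiff hg j).continuous.comp (continuous_id.prodMk continuous_const)
      have hderiv : ∀ c : ℝ, deriv (fun p : ℝ => pd^[j] g (p, q)) c = pd^[j+1] g (c, q) := by
        intro c
        rw [Function.iterate_succ_apply']
        exact (hasDerivAt_slice1 (pdIter_contDiff hg j) q c).deriv
      rcases lt_or_gt_of_ne hq with hqneg | hqpos
      · obtain ⟨c, hc, hc0⟩ := exists_deriv_eq_zero (f := fun p : ℝ => pd^[j] g (p, q)) hqneg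
          hcont.continuousOn hend.symm
        refine ⟨c, ?_, by rw [← hderiv c]; exact hc0⟩
        exact Ioo_subset_Icc_self.trans (by rw [uIcc_of_ge hqneg.le]) hc
      · obtain ⟨c, hc, hc0⟩ := exists_deriv_eq_zero (f := fun p : ℝ => pd^[j] g (p, q)) hqpos
          hcont.continuousOn hend
        refine ⟨c, ?_, by rw [← hderiv c]; exact hc0⟩
        exact Ioo_subset_Icc_self.trans (by rw [uIcc_of_le hqpos.le]) hc
  -- downward induction chain
  have hmem1 : ∀ r ∈ uIcc (0:ℝ) q, (r, q) ∈ (Icc (-1:ℝ) 1) ×ˢ (Icc (-1:ℝ) 1) := by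
    intro r hr
    have hq' : -1 ≤ q ∧ q ≤ 1 := abs_le.mp hq1
    have hr' : -1 ≤ r ∧ r ≤ 1 := by
      rcases le_total 0 q with h | h
      · rw [uIcc_of_le h] at hr; exact ⟨by linarith [hr.1], by linarith [hr.2, hq'.2]⟩
      · rw [uIcc_of_ge h] at hr; exact ⟨by linarith [hr.1, hq'.1], by linarith [hr.2]⟩
    exact ⟨⟨hr'.1, hr'.2⟩, ⟨hq'.1, hq'.2⟩⟩
  have chain : ∀ d j, j + d = K → ∀ r ∈ uIcc (0:ℝ) q, |pd^[j] g (r, q)| ≤ C * |q| ^ d := by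
    intro d
    induction d with
    | zero =>
      intro j hj r hr
      have hjK : j = K := by omega
      subst hjK
      have := hM (r, q) (hmem1 r hr)
      rw [Real.norm_eq_abs] at this
      calc |pd^[j] g (r, q)| ≤ M := this
        _ ≤ C * |q| ^ 0 := by rw [pow_zero, mul_one, hC]; exact (le_abs_self M).trans (by linarith)
    | succ d ih =>
      intro j hj r hr
      have hjd : (j + 1) + d = K := by omega
      obtain ⟨z, hz, hz0⟩ := hzero j
      have hder : ∀ x ∈ uIcc (0:ℝ) q, HasDerivWithinAt (fun p : ℝ => pd^[j] g (p, q))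
          (pd^[j+1] g (x, q)) (uIcc (0:ℝ) q) x := by
        intro x _
        rw [Function.iterate_succ_apply']
        exact (hasDerivAt_slice1 (pdIter_contDiff hg j) q x).hasDerivWithinAt
      have hbd : ∀ x ∈ uIcc (0:ℝ) q, ‖pd^[j+1] g (x, q)‖ ≤ C * |q| ^ d := by
        intro x hx
        rw [Real.norm_eq_abs]
        exact ih (j + 1) hjd x hx
      have mvt := Convex.norm_image_sub_le_of_norm_hasDerivWithin_le hder hbd
        (convex_uIcc _ _) hz hr
      have hzr : |r - z| ≤ |q| := by
        have := abs_sub_le_of_uIcc_subset_uIcc (uIcc_subset_uIcc hz hr)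
        simpa using this
      rw [hz0, sub_zero, Real.norm_eq_abs, Real.norm_eq_abs] at mvt
      calc |pd^[j] g (r, q)| ≤ C * |q| ^ d * |r - z| := mvt
        _ ≤ C * |q| ^ d * |q| := by
            apply mul_le_mul_of_nonneg_left hzr (by positivity)
        _ = C * |q| ^ (d + 1) := by ring
  -- reduce a general p to the fundamental domain
  set θ := Int.fract (p / q) with hθ
  set r := q * θ with hrdef
  have hfr : g (p, q) = g (r, q) := by
    have hLm := hi ⌊p / q⌋ (r, q)
    rw [Lmap_apply] at hLm
    have hrp : r + (⌊p / q⌋ : ℝ) * q = p := by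
      rw [hrdef, hθ, Int.fract]
      field_simp
      ring
    rw [hrp] at hLm
    exact hLm
  have hrmem : r ∈ uIcc (0:ℝ) q := by
    rw [← segment_eq_uIcc]
    refine ⟨1 - θ, θ, by linarith [Int.fract_nonneg (p / q), (Int.fract_lt_one (p / q)).le],
      Int.fract_nonneg (p / q), by ring, ?_⟩
    simp [smul_eq_mul, hrdef]
    ring
  rw [hfr]
  exact chain K 0 (by omega) r hrmem

lemma hasDerivAt_line {E : Type*} [NormedAddCommGroup E] [NormedSpace ℝ E]
    {Φ : ℝ × ℝ → E} (hΦ : Differentiable ℝ Φ) (x v : ℝ × ℝ) (t : ℝ) :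
    HasDerivAt (fun s : ℝ => Φ (x + s • v)) (fderiv ℝ Φ (x + t • v) v) t := by
  have h1 : HasDerivAt (fun s : ℝ => x + s • v) v t := by
    simpa using ((hasDerivAt_id t).smul_const v).const_add x
  exact (hΦ (x + t • v)).hasFDerivAt.comp_hasDerivAt t h1

lemma opnorm2 {E : Type*} [NormedAddCommGroup E] [NormedSpace ℝ E]
    (L : (ℝ × ℝ) →L[ℝ] E) : ‖L‖ ≤ ‖L (1, 0)‖ + ‖L (0, 1)‖ := by
  refine ContinuousLinearMap.opNorm_le_bound L (by positivity) fun w => ?_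
  have hw : w = w.1 • ((1:ℝ), (0:ℝ)) + w.2 • ((0:ℝ), (1:ℝ)) := by
    ext <;> simp
  calc ‖L w‖ = ‖w.1 • L (1, 0) + w.2 • L (0, 1)‖ := by
        conv_lhs => rw [hw]
        rw [map_add, map_smul, map_smul]
    _ ≤ ‖w.1 • L (1, 0)‖ + ‖w.2 • L (0, 1)‖ := norm_add_le _ _
    _ = |w.1| * ‖L (1, 0)‖ + |w.2| * ‖L (0, 1)‖ := by
        rw [norm_smul, norm_smul, Real.norm_eq_abs, Real.norm_eq_abs]
    _ ≤ ‖w‖ * ‖L (1, 0)‖ + ‖w‖ * ‖L (0, 1)‖ := by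
        have h1 : |w.1| ≤ ‖w‖ := norm_fst_le w
        have h2 : |w.2| ≤ ‖w‖ := norm_snd_le w
        gcongr <;> positivity
    _ = (‖L (1, 0)‖ + ‖L (0, 1)‖) * ‖w‖ := by ring

lemma norm_fderiv_iteratedFDeriv_sub {f : ℝ × ℝ → ℝ} (n : ℕ) (a b : ℝ × ℝ) :
    ‖fderiv ℝ (iteratedFDeriv ℝ n f) a - fderiv ℝ (iteratedFDeriv ℝ n f) b‖
      = ‖iteratedFDeriv ℝ (n + 1) f a - iteratedFDeriv ℝ (n + 1) f b‖ := by
  rw [fderiv_iteratedFDeriv]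
  simp only [Function.comp_apply]
  rw [← LinearIsometryEquiv.map_sub, LinearIsometryEquiv.norm_map]

set_option maxHeartbeats 2000000 in
lemma flat {g : ℝ × ℝ → ℝ} (hg : ContDiff ℝ (⊤ : ℕ∞) g) (hi : Inv g)
    (h0 : ∀ q : ℝ, g (0, q) = 0) (m : ℕ) (p₀ : ℝ) :
    iteratedFDeriv ℝ m g (p₀, 0) = 0 := by
  have main : ∀ m : ℕ, ∀ K : ℕ, ∃ C : ℝ, 0 < C ∧ ∃ δ : ℝ, 0 < δ ∧ δ ≤ 1 ∧
      ∀ p q : ℝ, |p - p₀| ≤ 1 / 2 ^ m → q ≠ 0 → |q| ≤ δ →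
        ‖iteratedFDeriv ℝ m g (p, q)‖ ≤ C * |q| ^ K := by
    intro m
    induction m with
    | zero =>
      intro K
      obtain ⟨C, hCpos, hCb⟩ := strip_bound hg hi h0 K
      refine ⟨C, hCpos, 1, one_pos, le_refl 1, fun p q _ hq hq1 => ?_⟩
      rw [norm_iteratedFDeriv_zero, Real.norm_eq_abs]
      exact hCb p q hq hq1
    | succ m ih =>
      intro K
      obtain ⟨C, hCpos, δ, hδpos, hδ1, hIH⟩ := ih (2 * K + 2)
      have hQcomp : IsCompact ((Icc (p₀ - 1) (p₀ + 1)) ×ˢ (Icc (-1:ℝ) 1)) :=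
        isCompact_Icc.prod isCompact_Icc
      have hD2cont : Continuous (iteratedFDeriv ℝ (m + 2) g) :=
        hg.continuous_iteratedFDeriv
          (by exact_mod_cast ENat.natCast_le_of_coe_top_le_withTop le_rfl (m + 2))
      obtain ⟨M, hM⟩ := hQcomp.exists_bound_of_continuousOn hD2cont.continuousOn
      set M₂ : ℝ := |M| + 1 with hM₂def
      have hM₂pos : 0 < M₂ := by positivity
      have hMQ : ∀ y ∈ (Icc (p₀ - 1) (p₀ + 1)) ×ˢ (Icc (-1:ℝ) 1),
          ‖iteratedFDeriv ℝ (m + 2) g y‖ ≤ M₂ := fun y hy =>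
        (hM y hy).trans ((le_abs_self M).trans (by linarith))
      set C' : ℝ := 2 * (4 ^ (K + 2) * C + M₂) with hC'def
      have hC'pos : 0 < C' := by positivity
      set δ' : ℝ := min (δ / 2) (1 / 2 ^ (m + 2)) with hδ'def
      have hδ'pos : 0 < δ' := lt_min (by linarith) (by positivity)
      have hδ'δ : 2 * δ' ≤ δ := by
        have := min_le_left (δ / 2) (1 / 2 ^ (m + 2)); rw [hδ'def]; linarith
      have hδ'small : δ' ≤ 1 / 2 ^ (m + 2) := min_le_right _ _
      have hδ'le1 : δ' ≤ 1 := by linarith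
      refine ⟨C', hC'pos, δ', hδ'pos, hδ'le1, fun p q hp hq hqδ => ?_⟩
      have hFdef : True := trivial
      have hF : ContDiff ℝ (⊤ : ℕ∞) (iteratedFDeriv ℝ m g) := hg.iteratedFDeriv_right (by norm_cast)
      have hD1 : ContDiff ℝ (⊤ : ℕ∞) (iteratedFDeriv ℝ (m + 1) g) :=
        hg.iteratedFDeriv_right (by norm_cast)
      have hFdiff : Differentiable ℝ (iteratedFDeriv ℝ m g) := hF.differentiable (by norm_cast)
      have hD1diff : Differentiable ℝ (iteratedFDeriv ℝ (m + 1) g) :=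
        hD1.differentiable (by norm_cast)
      set x : ℝ × ℝ := (p, q) with hxdef
      set h : ℝ := |q| ^ (K + 1) / 2 with hhdef
      have hqpos : 0 < |q| := abs_pos.mpr hq
      have hq1 : |q| ≤ 1 := hqδ.trans hδ'le1
      have hpow : |q| ^ (K + 1) ≤ |q| := by
        calc |q| ^ (K + 1) ≤ |q| ^ 1 := pow_le_pow_of_le_one (abs_nonneg q) hq1 (by omega)
          _ = |q| := pow_one _
      have hhpos : 0 < h := by positivity
      have hh2 : h ≤ |q| / 2 := by rw [hhdef]; linarith
      have h0mem : (0:ℝ) ∈ Icc (0:ℝ) h := ⟨le_refl 0, hhpos.le⟩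
      have hhmem : h ∈ Icc (0:ℝ) h := ⟨hhpos.le, le_refl h⟩
      -- the key directional estimate
      have key : ∀ v : ℝ × ℝ, ‖v‖ ≤ 1 →
          ‖fderiv ℝ (iteratedFDeriv ℝ m g) x v‖ ≤ 4 ^ (K + 2) * C * |q| ^ K + M₂ * |q| ^ K := by
        intro v hv
        have hv1 : |v.1| ≤ 1 := (norm_fst_le v).trans hv
        have hv2 : |v.2| ≤ 1 := (norm_snd_le v).trans hv
        have hcoord : ∀ t : ℝ, x + t • v = (p + t * v.1, q + t * v.2) := by
          intro t; rw [hxdef]; ext <;> simp <;> ring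
        have hseg : ∀ t ∈ Icc (0:ℝ) h,
            |p + t * v.1 - p₀| ≤ 1 / 2 ^ m ∧ (q + t * v.2 ≠ 0) ∧ |q + t * v.2| ≤ 2 * |q| := by
          intro t ht
          have ht0 := ht.1
          have hth := ht.2
          have htv1 : |t * v.1| ≤ h := by
            rw [abs_mul, abs_of_nonneg ht0]
            calc t * |v.1| ≤ t * 1 := by gcongr
              _ ≤ h := by linarith
          have htv2 : |t * v.2| ≤ h := by
            rw [abs_mul, abs_of_nonneg ht0]
            calc t * |v.2| ≤ t * 1 := by gcongr
              _ ≤ h := by linarith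
          refine ⟨?_, ?_, ?_⟩
          · have htri : |p + t * v.1 - p₀| ≤ |p - p₀| + |t * v.1| := by
              have := abs_add_le (p - p₀) (t * v.1)
              have e : p + t * v.1 - p₀ = (p - p₀) + t * v.1 := by ring
              rw [e]; exact this
            have hhh : h ≤ 1 / 2 ^ (m + 2) := by
              calc h ≤ |q| / 2 := hh2
                _ ≤ δ' / 2 := by linarith
                _ ≤ 1 / 2 ^ (m + 2) := by linarith
            have harith : (1:ℝ) / 2 ^ (m + 1) + 1 / 2 ^ (m + 2) ≤ 1 / 2 ^ m := by
              have h2m : (0:ℝ) < 2 ^ m := by positivity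
              have e1 : (2:ℝ) ^ (m + 1) = 2 ^ m * 2 := pow_succ 2 m
              have e2 : (2:ℝ) ^ (m + 2) = 2 ^ m * 4 := by
                rw [pow_succ, pow_succ]; ring
              rw [e1, e2]
              rw [div_add_div _ _ (by positivity) (by positivity),
                div_le_div_iff₀ (by positivity) (by positivity)]
              nlinarith [h2m]
            calc |p + t * v.1 - p₀| ≤ |p - p₀| + |t * v.1| := htri
              _ ≤ 1 / 2 ^ (m + 1) + 1 / 2 ^ (m + 2) := add_le_add hp (htv1.trans hhh)
              _ ≤ 1 / 2 ^ m := harith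
          · intro hcontra
            have hqe : |q| ≤ h := by
              have e : q = -(t * v.2) := by linarith
              rw [e, abs_neg]; exact htv2
            linarith
          · calc |q + t * v.2| ≤ |q| + |t * v.2| := abs_add_le _ _
              _ ≤ |q| + h := by linarith
              _ ≤ 2 * |q| := by linarith
        have hFbound : ∀ t ∈ Icc (0:ℝ) h, ‖iteratedFDeriv ℝ m g (x + t • v)‖ ≤ C * (2 * |q|) ^ (2 * K + 2) := by
          intro t ht
          obtain ⟨hA, hB, hC2⟩ := hseg t ht
          rw [hcoord t]
          have h2q : |q + t * v.2| ≤ δ := by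
            calc |q + t * v.2| ≤ 2 * |q| := hC2
              _ ≤ 2 * δ' := by linarith
              _ ≤ δ := hδ'δ
          calc ‖iteratedFDeriv ℝ m g (p + t * v.1, q + t * v.2)‖
              ≤ C * |q + t * v.2| ^ (2 * K + 2) := hIH _ _ hA hB h2q
            _ ≤ C * (2 * |q|) ^ (2 * K + 2) := by gcongr
        have hD2seg : ∀ t ∈ Icc (0:ℝ) h,
            ‖iteratedFDeriv ℝ (m + 2) g (x + t • v)‖ ≤ M₂ := by
          intro t ht
          obtain ⟨hA, hB, hC2⟩ := hseg t ht
          rw [hcoord t]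
          apply hMQ
          have h2m1 : (1:ℝ) ≤ 2 ^ m := by exact_mod_cast Nat.one_le_two_pow
          have hone : (1:ℝ) / 2 ^ m ≤ 1 := by
            rw [div_le_one (by positivity)]; exact h2m1
          have hA' := abs_le.mp (hA.trans hone)
          have hq2 : |q + t * v.2| ≤ 1 := by
            calc |q + t * v.2| ≤ 2 * |q| := hC2
              _ ≤ 2 * δ' := by linarith
              _ ≤ δ := hδ'δ
              _ ≤ 1 := hδ1
          have hq2' := abs_le.mp hq2
          simp only [Set.mem_prod, Set.mem_Icc]
          exact ⟨⟨by linarith [hA'.1], by linarith [hA'.2]⟩, hq2'.1, hq2'.2⟩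
        -- inner mean value estimate on the (m+1)-st derivative
        have hMVT1 : ∀ t ∈ Icc (0:ℝ) h,
            ‖iteratedFDeriv ℝ (m + 1) g (x + t • v) - iteratedFDeriv ℝ (m + 1) g x‖
              ≤ M₂ * t := by
          intro t ht
          have hmvt := Convex.norm_image_sub_le_of_norm_hasDerivWithin_le
            (f := fun s : ℝ => iteratedFDeriv ℝ (m + 1) g (x + s • v))
            (f' := fun s : ℝ => fderiv ℝ (iteratedFDeriv ℝ (m + 1) g) (x + s • v) v)
            (s := Icc (0:ℝ) h)
            (fun s _ => (hasDerivAt_line hD1diff x v s).hasDerivWithinAt)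
            (fun s hs => by
              calc ‖fderiv ℝ (iteratedFDeriv ℝ (m + 1) g) (x + s • v) v‖
                  ≤ ‖fderiv ℝ (iteratedFDeriv ℝ (m + 1) g) (x + s • v)‖ * ‖v‖ :=
                    ContinuousLinearMap.le_opNorm _ _
                _ ≤ M₂ * 1 := by
                    apply mul_le_mul _ hv (norm_nonneg v) hM₂pos.le
                    rw [norm_fderiv_iteratedFDeriv]
                    exact hD2seg s hs
                _ = M₂ := mul_one _)
            (convex_Icc _ _) h0mem ht
          simpa [Real.norm_eq_abs, abs_of_nonneg ht.1] using hmvt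
        have hopdiff : ∀ t ∈ Icc (0:ℝ) h,
            ‖fderiv ℝ (iteratedFDeriv ℝ m g) (x + t • v)
              - fderiv ℝ (iteratedFDeriv ℝ m g) x‖ ≤ M₂ * t := by
          intro t ht
          rw [norm_fderiv_iteratedFDeriv_sub]
          exact hMVT1 t ht
        -- outer mean value estimate
        have hMVT2 : ‖(iteratedFDeriv ℝ m g (x + h • v) - h • (fderiv ℝ (iteratedFDeriv ℝ m g) x v)) - iteratedFDeriv ℝ m g x‖ ≤ (M₂ * h) * h := by
          have hmvt := Convex.norm_image_sub_le_of_norm_hasDerivWithin_le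
            (f := fun s : ℝ => iteratedFDeriv ℝ m g (x + s • v) - s • (fderiv ℝ (iteratedFDeriv ℝ m g) x v))
            (f' := fun s : ℝ => fderiv ℝ (iteratedFDeriv ℝ m g) (x + s • v) v - fderiv ℝ (iteratedFDeriv ℝ m g) x v)
            (s := Icc (0:ℝ) h)
            (fun s _ => by
              have hd := ((hasDerivAt_line hFdiff x v s).sub
                ((hasDerivAt_id s).smul_const
                  (fderiv ℝ (iteratedFDeriv ℝ m g) x v))).hasDerivWithinAt (s := Icc (0:ℝ) h)
              rw [one_smul] at hd
              exact hd)
            (fun s hs => by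
              show ‖fderiv ℝ (iteratedFDeriv ℝ m g) (x + s • v) v
                - fderiv ℝ (iteratedFDeriv ℝ m g) x v‖ ≤ M₂ * h
              have e : fderiv ℝ (iteratedFDeriv ℝ m g) (x + s • v) v - fderiv ℝ (iteratedFDeriv ℝ m g) x v
                  = (fderiv ℝ (iteratedFDeriv ℝ m g) (x + s • v) - fderiv ℝ (iteratedFDeriv ℝ m g) x) v := by
                rw [ContinuousLinearMap.sub_apply]
              rw [e]
              calc ‖(fderiv ℝ (iteratedFDeriv ℝ m g) (x + s • v) - fderiv ℝ (iteratedFDeriv ℝ m g) x) v‖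
                  ≤ ‖fderiv ℝ (iteratedFDeriv ℝ m g) (x + s • v) - fderiv ℝ (iteratedFDeriv ℝ m g) x‖ * ‖v‖ :=
                    ContinuousLinearMap.le_opNorm _ _
                _ ≤ (M₂ * s) * 1 :=
                    mul_le_mul (hopdiff s hs) hv (norm_nonneg v)
                      (mul_nonneg hM₂pos.le hs.1)
                _ ≤ M₂ * h := by have := hs.2; nlinarith [hs.1])
            (convex_Icc _ _) h0mem hhmem
          simpa [Real.norm_eq_abs, abs_of_nonneg hhpos.le] using hmvt
        have t1 : ‖iteratedFDeriv ℝ m g (x + h • v)‖ ≤ C * (2 * |q|) ^ (2 * K + 2) := hFbound h hhmem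
        have t2 : ‖iteratedFDeriv ℝ m g x‖ ≤ C * (2 * |q|) ^ (2 * K + 2) := by
          have := hFbound 0 h0mem
          simpa using this
        have hkey : h * ‖fderiv ℝ (iteratedFDeriv ℝ m g) x v‖
            ≤ 2 * (C * (2 * |q|) ^ (2 * K + 2)) + (M₂ * h) * h := by
          set A := iteratedFDeriv ℝ m g (x + h • v) with hAdef
          set B := iteratedFDeriv ℝ m g x with hBdef
          set W := h • (fderiv ℝ (iteratedFDeriv ℝ m g) x v) with hWdef
          have hsmul : ‖W‖ = h * ‖fderiv ℝ (iteratedFDeriv ℝ m g) x v‖ := by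
            have hns := norm_smul h (fderiv ℝ (iteratedFDeriv ℝ m g) x v)
            rw [Real.norm_eq_abs, abs_of_pos hhpos] at hns
            rw [hWdef]
            exact hns
          have htri : ‖W‖ ≤ ‖A‖ + ‖B‖ + ‖A - W - B‖ := by
            have ee : W = A - B - (A - W - B) := by abel
            calc ‖W‖ = ‖A - B - (A - W - B)‖ := by rw [← ee]
              _ ≤ ‖A - B‖ + ‖A - W - B‖ := norm_sub_le _ _
              _ ≤ (‖A‖ + ‖B‖) + ‖A - W - B‖ := by
                  have := norm_sub_le A B
                  linarith
          have hAWB : ‖A - W - B‖ ≤ (M₂ * h) * h := hMVT2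
          rw [hsmul] at htri
          linarith [t1, t2]
        -- divide through by h
        set a : ℝ := |q| with hadef
        have ha1 : a ≤ 1 := hq1
        have hapos : 0 < a := hqpos
        have e1 : (2 * a) ^ (2 * K + 2) = 2 ^ (2 * K + 2) * a ^ (2 * K + 2) := mul_pow _ _ _
        have e2 : (4:ℝ) ^ (K + 2) = 2 ^ (2 * K + 4) := by
          rw [show (4:ℝ) = 2 ^ 2 by norm_num, ← pow_mul, show 2 * (K + 2) = 2 * K + 4 by omega]
        have e3 : a ^ (K + 1) * a ^ K = a ^ (2 * K + 1) := by
          rw [← pow_add]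
          congr 1
          omega
        have e4 : a ^ (2 * K + 2) ≤ a ^ (2 * K + 1) :=
          pow_le_pow_of_le_one hapos.le ha1 (by omega)
        have e5 : a ^ (K + 1) * a ^ (K + 1) = a ^ (2 * K + 2) := by
          rw [← pow_add]
          congr 1
          omega
        have hsuff : 2 * (C * (2 * a) ^ (2 * K + 2)) + (M₂ * h) * h
            ≤ h * (4 ^ (K + 2) * C * a ^ K + M₂ * a ^ K) := by
          rw [hhdef, e1, e2]
          have p1 : (0:ℝ) < 2 ^ (2 * K + 2) := by positivity
          have hexp : (2:ℝ) ^ (2 * K + 4) = 4 * 2 ^ (2 * K + 2) := by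
            rw [show 2 * K + 4 = (2 * K + 2) + 2 by omega, pow_add]
            ring
          rw [hexp]
          have hterm1 : 2 * (C * (2 ^ (2 * K + 2) * a ^ (2 * K + 2)))
              ≤ a ^ (K + 1) / 2 * (4 * 2 ^ (2 * K + 2) * C * a ^ K) := by
            have : a ^ (K + 1) / 2 * (4 * 2 ^ (2 * K + 2) * C * a ^ K)
                = 2 * (C * (2 ^ (2 * K + 2) * a ^ (2 * K + 1))) := by
              rw [show a ^ (K + 1) / 2 * (4 * 2 ^ (2 * K + 2) * C * a ^ K)
                  = 2 * (C * (2 ^ (2 * K + 2) * (a ^ (K + 1) * a ^ K))) by ring, e3]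
            rw [this]
            gcongr
          have hterm2 : (M₂ * (a ^ (K + 1) / 2)) * (a ^ (K + 1) / 2)
              ≤ a ^ (K + 1) / 2 * (M₂ * a ^ K) := by
            have lhs_eq : (M₂ * (a ^ (K + 1) / 2)) * (a ^ (K + 1) / 2)
                = a ^ (K + 1) / 2 * (M₂ * (a ^ (K + 1) / 2)) := by ring
            have hhalf : a ^ (K + 1) / 2 ≤ a ^ K := by
              have hh1 : a ^ (K + 1) ≤ a ^ K := pow_le_pow_of_le_one hapos.le ha1 (by omega)
              have hh0 : (0:ℝ) ≤ a ^ (K + 1) := by positivity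
              linarith
            rw [lhs_eq]
            gcongr
          calc 2 * (C * (2 ^ (2 * K + 2) * a ^ (2 * K + 2)))
                + (M₂ * (a ^ (K + 1) / 2)) * (a ^ (K + 1) / 2)
              ≤ a ^ (K + 1) / 2 * (4 * 2 ^ (2 * K + 2) * C * a ^ K)
                + a ^ (K + 1) / 2 * (M₂ * a ^ K) := add_le_add hterm1 hterm2
            _ = a ^ (K + 1) / 2 * (4 * 2 ^ (2 * K + 2) * C * a ^ K + M₂ * a ^ K) := by ring
        have := hkey.trans hsuff
        exact le_of_mul_le_mul_left (by linarith [this]) hhpos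
      -- assemble the operator-norm bound
      rw [show m + 1 = m + 1 from rfl, ← norm_fderiv_iteratedFDeriv (𝕜 := ℝ)]
      have hn1 : ‖((1:ℝ), (0:ℝ))‖ ≤ 1 := by simp [Prod.norm_def]
      have hn2 : ‖((0:ℝ), (1:ℝ))‖ ≤ 1 := by simp [Prod.norm_def]
      calc ‖fderiv ℝ (iteratedFDeriv ℝ m g) x‖ ≤ ‖fderiv ℝ (iteratedFDeriv ℝ m g) x (1, 0)‖ + ‖fderiv ℝ (iteratedFDeriv ℝ m g) x (0, 1)‖ := opnorm2 _
        _ ≤ (4 ^ (K + 2) * C * |q| ^ K + M₂ * |q| ^ K)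
            + (4 ^ (K + 2) * C * |q| ^ K + M₂ * |q| ^ K) :=
              add_le_add (key (1, 0) hn1) (key (0, 1) hn2)
        _ = C' * |q| ^ K := by rw [hC'def]; ring
  -- conclude flatness by continuity
  obtain ⟨C, hC, δ, hδ, hδ1, hb⟩ := main m 1
  have hcont : Continuous (iteratedFDeriv ℝ m g) :=
    hg.continuous_iteratedFDeriv
      (by exact_mod_cast ENat.natCast_le_of_coe_top_le_withTop le_rfl m)
  have hε : ∀ ε > 0, ‖iteratedFDeriv ℝ m g (p₀, 0)‖ ≤ ε := by
    intro ε hεpos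
    have hca : ContinuousAt (iteratedFDeriv ℝ m g) (p₀, 0) := hcont.continuousAt
    rw [Metric.continuousAt_iff] at hca
    obtain ⟨r, hr, hball⟩ := hca (ε / 2) (by positivity)
    set q0 : ℝ := min (r / 2) (min δ (ε / (2 * C))) with hq0def
    have hq0pos : 0 < q0 := lt_min (by linarith) (lt_min hδ (by positivity))
    have hq0r : q0 < r := by
      have := min_le_left (r / 2) (min δ (ε / (2 * C)))
      rw [hq0def]; linarith
    have hq0δ : q0 ≤ δ := by
      have h1 := min_le_right (r / 2) (min δ (ε / (2 * C)))
      have h2 := min_le_left δ (ε / (2 * C))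
      rw [hq0def]; exact h1.trans h2
    have hq0ε : q0 ≤ ε / (2 * C) := by
      have h1 := min_le_right (r / 2) (min δ (ε / (2 * C)))
      have h2 := min_le_right δ (ε / (2 * C))
      rw [hq0def]; exact h1.trans h2
    have hd : dist ((p₀, q0) : ℝ × ℝ) ((p₀, 0) : ℝ × ℝ) < r := by
      rw [Prod.dist_eq]
      simp only [Real.dist_eq, sub_self, abs_zero, sub_zero, abs_of_pos hq0pos]
      rw [max_lt_iff]
      exact ⟨hr, hq0r⟩
    have h1 := hball hd
    have h2 : ‖iteratedFDeriv ℝ m g (p₀, q0)‖ ≤ C * |q0| ^ 1 := by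
      apply hb p₀ q0 _ (ne_of_gt hq0pos) _
      · simp only [sub_self, abs_zero]
        positivity
      · rw [abs_of_pos hq0pos]; exact hq0δ
    rw [pow_one, abs_of_pos hq0pos] at h2
    have htri : ‖iteratedFDeriv ℝ m g (p₀, 0)‖
        ≤ ‖iteratedFDeriv ℝ m g (p₀, 0) - iteratedFDeriv ℝ m g (p₀, q0)‖
          + ‖iteratedFDeriv ℝ m g (p₀, q0)‖ := by
      have e : iteratedFDeriv ℝ m g (p₀, 0)
          = (iteratedFDeriv ℝ m g (p₀, 0) - iteratedFDeriv ℝ m g (p₀, q0))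
            + iteratedFDeriv ℝ m g (p₀, q0) := by abel
      conv_lhs => rw [e]
      exact norm_add_le _ _
    have hdist : ‖iteratedFDeriv ℝ m g (p₀, 0) - iteratedFDeriv ℝ m g (p₀, q0)‖ < ε / 2 := by
      rw [← dist_eq_norm, dist_comm]
      exact h1
    have hCq : C * q0 ≤ ε / 2 := by
      calc C * q0 ≤ C * (ε / (2 * C)) := by gcongr
        _ = ε / 2 := by field_simp
    linarith
  have hle0 : ‖iteratedFDeriv ℝ m g (p₀, 0)‖ ≤ 0 := by
    apply le_of_forall_pos_le_add
    intro ε hεpos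
    simpa using hε ε hεpos
  exact norm_le_zero_iff.mp hle0
end Stmt1Aux

/-- Decomposition of smooth `G`-invariant functions: `f = h + g` with
`h(p,q) = f(0,q)` depending only on `q`, and `g` smooth, `G`-invariant and
flat along the line `q = 0`. -/
theorem stmt1 (f : ℝ × ℝ → ℝ) (hf : ContDiff ℝ (⊤ : ℕ∞) f)
    (hinv : ∀ (n : ℤ) (p q : ℝ), f (p + n * q, q) = f (p, q)) :
    ∃ g : ℝ × ℝ → ℝ, ContDiff ℝ (⊤ : ℕ∞) g ∧
      (∀ (n : ℤ) (p q : ℝ), g (p + n * q, q) = g (p, q)) ∧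
      (∀ p q : ℝ, f (p, q) = f (0, q) + g (p, q)) ∧
      (∀ (m : ℕ) (p : ℝ), iteratedFDeriv ℝ m g (p, 0) = 0) := by
  set g : ℝ × ℝ → ℝ := fun x => f x - f (0, x.2) with hgdef
  have hgsmooth : ContDiff ℝ (⊤ : ℕ∞) g :=
    hf.sub (hf.comp (contDiff_const.prodMk contDiff_snd))
  have hginv : ∀ (n : ℤ) (p q : ℝ), g (p + n * q, q) = g (p, q) := by
    intro n p q
    simp only [hgdef]
    rw [hinv n p q]
  have hgInv : Stmt1Aux.Inv g := by
    intro n x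
    obtain ⟨p, q⟩ := x
    rw [Stmt1Aux.Lmap_apply]
    exact hginv n p q
  have hg0 : ∀ q : ℝ, g (0, q) = 0 := by
    intro q
    simp [hgdef]
  refine ⟨g, hgsmooth, hginv, ?_, ?_⟩
  · intro p q
    simp only [hgdef]
    ring
  · intro m p
    exact Stmt1Aux.flat hgsmooth hgInv hg0 m p
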